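/- Let λ : ℕ → ℝ be summable with λ(n) ≥ 0 for all n, and let u, v ∈ ℓ² with ‖u‖ ≤ 1 and ‖v‖ ≤ 1. Then the family, indexed by all multi-indices I, given by I ↦ λ(|I|)·(|I|!/I!)·∏_j (conj(u(j))·v(j))^(I(j)) is summable, and its sum equals ∑'_n λ(n)·(⟪u, v⟫)^n, where ⟪u, v⟫ = ∑'_j conj(u(j))·v(j) is the ℓ² inner product. -/

import Mathlib

open scoped BigOperators ComplexInnerProductSpace ENNReal

/-- The degree `|I| = ∑_j I j` of a multi-index. -/
noncomputable def mdeg (I : ℕ →₀ ℕ) : ℕ := I.sum fun _ n => n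

/-- The factorial `I! = ∏_j (I j)!` of a multi-index. -/
noncomputable def mfact (I : ℕ →₀ ℕ) : ℕ := I.prod fun _ n => n.factorial

/-- Multinomial theorem, finsupp version. -/
lemma aux_multinomial_thm {R : Type*} [CommSemiring R] (g : ℕ → R) (s : Finset ℕ) (n : ℕ) :
    (∑ i ∈ s, g i) ^ n =
      ∑ I ∈ s.finsuppAntidiag n, (Finsupp.multinomial I : R) * ∏ j ∈ I.support, g j ^ I j := by
  classical
  rw [Finset.sum_pow_eq_sum_piAntidiag]
  refine Finset.sum_nbij' (i := fun k => Finsupp.indicator s fun j _ => k j)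
    (j := fun I => ⇑I) ?_ ?_ ?_ ?_ ?_
  · intro k hk
    rw [Finset.mem_piAntidiag] at hk
    rw [Finset.mem_finsuppAntidiag]
    constructor
    · rw [← hk.1]
      exact Finset.sum_congr rfl fun j hj => Finsupp.indicator_of_mem hj _
    · intro j hj
      by_contra hjs
      exact (Finsupp.mem_support_iff.1 hj) (Finsupp.indicator_of_notMem hjs _)
  · intro I hI
    rw [Finset.mem_finsuppAntidiag] at hI
    rw [Finset.mem_piAntidiag]
    exact ⟨hI.1, fun i hi => hI.2 (Finsupp.mem_support_iff.2 hi)⟩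
  · intro k hk
    rw [Finset.mem_piAntidiag] at hk
    funext j
    show (Finsupp.indicator s fun j' _ => k j') j = k j
    by_cases hj : j ∈ s
    · exact Finsupp.indicator_of_mem hj _
    · rw [Finsupp.indicator_of_notMem hj]
      by_contra h
      exact hj (hk.2 j (fun h0 => h h0.symm))
  · intro I hI
    rw [Finset.mem_finsuppAntidiag] at hI
    ext j
    show (Finsupp.indicator s fun j' _ => I j') j = I j
    by_cases hj : j ∈ s
    · exact Finsupp.indicator_of_mem hj _
    · rw [Finsupp.indicator_of_notMem hj]
      exact (Finsupp.notMem_support_iff.1 fun h => hj (hI.2 h)).symm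
  · intro k hk
    have hmem := Finset.mem_piAntidiag.1 hk
    set I : ℕ →₀ ℕ := Finsupp.indicator s fun j _ => k j with hI
    have hIk : ∀ j ∈ s, I j = k j := fun j hj => Finsupp.indicator_of_mem hj _
    have hsupp : I.support ⊆ s := by
      intro j hj
      by_contra hjs
      exact (Finsupp.mem_support_iff.1 hj) (Finsupp.indicator_of_notMem hjs _)
    have h1 : Nat.multinomial s k = Finsupp.multinomial I := by
      rw [Finsupp.multinomial_eq]
      unfold Nat.multinomial
      have hs : ∑ i ∈ s, k i = ∑ i ∈ I.support, I i := by
        rw [Finset.sum_congr rfl fun j hj => (hIk j hj).symm]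
        exact (Finset.sum_subset hsupp fun j _ hj => Finsupp.notMem_support_iff.1 hj).symm
      have hp : ∏ i ∈ s, (k i).factorial = ∏ i ∈ I.support, (I i).factorial := by
        rw [Finset.prod_congr rfl fun j hj => by rw [← hIk j hj]]
        refine (Finset.prod_subset hsupp fun j _ hj => ?_).symm
        rw [Finsupp.notMem_support_iff.1 hj, Nat.factorial_zero]
      rw [hs, hp]
    have h2 : ∏ i ∈ s, g i ^ k i = ∏ j ∈ I.support, g j ^ I j := by
      rw [Finset.prod_congr rfl fun j hj => by rw [← hIk j hj]]
      refine (Finset.prod_subset hsupp fun j _ hj => ?_).symm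
      rw [Finsupp.notMem_support_iff.1 hj, pow_zero]
    rw [h1, h2]

lemma aux_mem_finsuppAntidiag (m n : ℕ) (I : ℕ →₀ ℕ) :
    I ∈ (Finset.range m).finsuppAntidiag n ↔ mdeg I = n ∧ I.support ⊆ Finset.range m := by
  rw [Finset.mem_finsuppAntidiag']
  rfl

/-- Sum over the truncated set of degree-`n` multi-indices. -/
lemma aux_sum_truncated {R : Type*} [CommSemiring R] (f : ℕ → R) (n m : ℕ) :
    ∑ I ∈ ((Finset.range m).finsuppAntidiag n).subtype (fun I => mdeg I = n),
      ((Finsupp.multinomial I.1 : R) * ∏ j ∈ I.1.support, f j ^ I.1 j)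
      = (∑ j ∈ Finset.range m, f j) ^ n := by
  classical
  rw [aux_multinomial_thm f (Finset.range m) n]
  rw [Finset.sum_subtype_eq_sum_filter (fun I : ℕ →₀ ℕ => (Finsupp.multinomial I : R) * ∏ j ∈ I.support, f j ^ I j) (p := fun I => mdeg I = n)]
  refine Finset.sum_congr ?_ fun _ _ => rfl
  refine Finset.filter_true_of_mem fun I hI => ?_
  exact ((aux_mem_finsuppAntidiag m n I).1 hI).1

/-- The key analytic lemma: for `g` with summable norms, the sum over all multi-indices of
degree `n` of `multinomial I * ∏ g^I` equals `(∑' g)^n`. -/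
lemma aux_hasSum_fiber {𝕜 : Type*} [RCLike 𝕜] (g : ℕ → 𝕜)
    (hg : Summable fun j => ‖g j‖) (n : ℕ) :
    HasSum (fun I : {I : ℕ →₀ ℕ // mdeg I = n} =>
      (Finsupp.multinomial I.1 : 𝕜) * ∏ j ∈ I.1.support, g j ^ I.1 j)
      ((∑' j, g j) ^ n) := by
  classical
  set b : ℕ → ℝ := fun j => ‖g j‖ with hb_def
  have hb0 : ∀ j, 0 ≤ b j := fun j => norm_nonneg _
  set F : {I : ℕ →₀ ℕ // mdeg I = n} → 𝕜 := fun I =>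
    (Finsupp.multinomial I.1 : 𝕜) * ∏ j ∈ I.1.support, g j ^ I.1 j with hF_def
  set μ : {I : ℕ →₀ ℕ // mdeg I = n} → ℝ := fun I =>
    (Finsupp.multinomial I.1 : ℝ) * ∏ j ∈ I.1.support, b j ^ I.1 j with hμ_def
  have hμ0 : ∀ I, 0 ≤ μ I := fun I =>
    mul_nonneg (Nat.cast_nonneg _) (Finset.prod_nonneg fun j _ => pow_nonneg (hb0 j) _)
  have hnorm : ∀ I, ‖F I‖ = μ I := by
    intro I
    rw [hF_def, hμ_def]
    simp only [norm_mul, norm_prod, norm_pow, RCLike.norm_natCast]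
    rfl
  -- the truncated finsets
  set S : ℕ → Finset {I : ℕ →₀ ℕ // mdeg I = n} := fun m =>
    ((Finset.range m).finsuppAntidiag n).subtype (fun I => mdeg I = n) with hS_def
  have hS_mem : ∀ m (I : {I : ℕ →₀ ℕ // mdeg I = n}),
      I ∈ S m ↔ I.1.support ⊆ Finset.range m := by
    intro m I
    rw [hS_def, Finset.mem_subtype, aux_mem_finsuppAntidiag]
    exact ⟨fun h => h.2, fun h => ⟨I.2, h⟩⟩
  have hS_mono : Monotone S := by
    intro m m' hmm I hI
    rw [hS_mem] at hI ⊢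
    exact hI.trans (Finset.range_subset_range.2 hmm)
  have hS_cover : ∀ I : {I : ℕ →₀ ℕ // mdeg I = n}, ∃ m, I ∈ S m := by
    intro I
    refine ⟨I.1.support.sup id + 1, (hS_mem _ _).2 fun j hj => ?_⟩
    rw [Finset.mem_range]
    exact Nat.lt_succ_of_le (Finset.le_sup (f := id) hj)
  -- summability of norms
  have hbound : ∀ T : Finset {I : ℕ →₀ ℕ // mdeg I = n}, ∑ I ∈ T, μ I ≤ (∑' j, b j) ^ n := by
    intro T
    obtain ⟨m, hm⟩ : ∃ m, T ⊆ S m := by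
      refine ⟨(T.sup fun I => I.1.support.sup id) + 1, fun I hI => ?_⟩
      rw [hS_mem]
      intro j hj
      rw [Finset.mem_range]
      exact Nat.lt_succ_of_le ((Finset.le_sup (f := id) hj).trans
        (Finset.le_sup (f := fun I => I.1.support.sup id) hI))
    calc ∑ I ∈ T, μ I ≤ ∑ I ∈ S m, μ I :=
          Finset.sum_le_sum_of_subset_of_nonneg hm fun I _ _ => hμ0 I
      _ = (∑ j ∈ Finset.range m, b j) ^ n := aux_sum_truncated b n m
      _ ≤ (∑' j, b j) ^ n := by
          refine pow_le_pow_left₀ (Finset.sum_nonneg fun j _ => hb0 j) ?_ n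
          exact Summable.sum_le_tsum _ (fun j _ => hb0 j) hg
  have hμ_sum : Summable μ := summable_of_sum_le hμ0 hbound
  have hF_sum : Summable F := by
    refine Summable.of_norm ?_
    simpa only [hnorm] using hμ_sum
  obtain ⟨t, ht⟩ := hF_sum
  -- identify the limit
  have h1 : Filter.Tendsto (fun m => ∑ I ∈ S m, F I) Filter.atTop (nhds t) :=
    ht.comp (Filter.tendsto_atTop_finset_of_monotone hS_mono hS_cover)
  have h2 : Filter.Tendsto (fun m => ∑ I ∈ S m, F I) Filter.atTop (nhds ((∑' j, g j) ^ n)) := by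
    have heq : (fun m => ∑ I ∈ S m, F I) = fun m => (∑ j ∈ Finset.range m, g j) ^ n := by
      funext m
      exact aux_sum_truncated g n m
    rw [heq]
    exact (hg.of_norm.hasSum.tendsto_sum_nat).pow n
  rwa [tendsto_nhds_unique h1 h2] at ht

theorem stmt6 (lam : ℕ → ℝ) (hlam_sum : Summable lam) (hlam_nonneg : ∀ n, 0 ≤ lam n)
    (u v : lp (fun _ : ℕ => ℂ) 2) (hu : ‖u‖ ≤ 1) (hv : ‖v‖ ≤ 1) :
    (Summable fun I : ℕ →₀ ℕ =>
      (lam (mdeg I) : ℂ) * ((Nat.factorial (mdeg I) : ℂ) / (mfact I : ℂ)) *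
        ∏ j ∈ I.support, ((starRingEnd ℂ) (u j) * v j) ^ I j) ∧
    ∑' I : ℕ →₀ ℕ,
        (lam (mdeg I) : ℂ) * ((Nat.factorial (mdeg I) : ℂ) / (mfact I : ℂ)) *
          ∏ j ∈ I.support, ((starRingEnd ℂ) (u j) * v j) ^ I j =
      ∑' n : ℕ, (lam n : ℂ) * (⟪u, v⟫ : ℂ) ^ n := by
  classical
  set w : ℕ → ℂ := fun j => (starRingEnd ℂ) (u j) * v j with hw_def
  have hconj : ((2 : ℝ≥0∞).toReal).HolderConjugate ((2 : ℝ≥0∞).toReal) := by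
    rw [Real.holderConjugate_iff]
    norm_num
  have hH := lp.tsum_mul_le_mul_norm hconj u v
  have hw_norm : ∀ j, ‖w j‖ = ‖u j‖ * ‖v j‖ := by
    intro j
    rw [hw_def]
    simp [norm_mul]
  have hw_sum : Summable fun j => ‖w j‖ := by
    simpa only [hw_norm] using hH.1
  have ha1 : ∑' j, ‖w j‖ ≤ 1 := by
    calc ∑' j, ‖w j‖ = ∑' j, ‖u j‖ * ‖v j‖ := by simp only [hw_norm]
      _ ≤ ‖u‖ * ‖v‖ := hH.2
      _ ≤ 1 := by
          calc ‖u‖ * ‖v‖ ≤ 1 * 1 :=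
                mul_le_mul hu hv (norm_nonneg _) (by linarith [norm_nonneg u])
            _ = 1 := by ring
  have hinner : (⟪u, v⟫ : ℂ) = ∑' j, w j := by
    rw [lp.inner_eq_tsum]
    exact tsum_congr fun j => mul_comm (v j) ((starRingEnd ℂ) (u j))
  -- the term rewritten with multinomials
  have hterm : ∀ I : ℕ →₀ ℕ,
      (lam (mdeg I) : ℂ) * ((Nat.factorial (mdeg I) : ℂ) / (mfact I : ℂ)) *
        ∏ j ∈ I.support, w j ^ I j
      = (lam (mdeg I) : ℂ) * ((Finsupp.multinomial I : ℂ) * ∏ j ∈ I.support, w j ^ I j) := by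
    intro I
    have hfacpos : 0 < mfact I := by
      rw [mfact, Finsupp.prod]
      exact Finset.prod_pos fun j _ => Nat.factorial_pos _
    have hfac : (mfact I : ℂ) ≠ 0 := Nat.cast_ne_zero.2 hfacpos.ne'
    have hspec : (mfact I) * Finsupp.multinomial I = Nat.factorial (mdeg I) := by
      rw [Finsupp.multinomial_eq, mfact, mdeg, Finsupp.prod, Finsupp.sum]
      exact Nat.multinomial_spec _ _
    have hdiv : (Nat.factorial (mdeg I) : ℂ) / (mfact I : ℂ) = (Finsupp.multinomial I : ℂ) := by
      rw [← hspec]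
      push_cast
      rw [mul_comm, mul_div_assoc, div_self hfac, mul_one]
    rw [hdiv, mul_assoc]
  -- the sigma equivalence
  set e : (Σ n : ℕ, {I : ℕ →₀ ℕ // mdeg I = n}) ≃ (ℕ →₀ ℕ) := Equiv.sigmaFiberEquiv mdeg
    with he_def
  set F : (ℕ →₀ ℕ) → ℂ := fun I =>
    (lam (mdeg I) : ℂ) * ((Finsupp.multinomial I : ℂ) * ∏ j ∈ I.support, w j ^ I j) with hF_def
  -- fiberwise HasSum
  have hfiber : ∀ n : ℕ, HasSum (fun I : {I : ℕ →₀ ℕ // mdeg I = n} => F I.1)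
      ((lam n : ℂ) * (∑' j, w j) ^ n) := by
    intro n
    refine ((aux_hasSum_fiber w hw_sum n).mul_left (lam n : ℂ)).congr_fun ?_
    intro I
    rw [hF_def]
    simp only [I.2]
  have hfiberR : ∀ n : ℕ, HasSum (fun I : {I : ℕ →₀ ℕ // mdeg I = n} =>
      (Finsupp.multinomial I.1 : ℝ) * ∏ j ∈ I.1.support, ‖w j‖ ^ I.1 j)
      ((∑' j, ‖w j‖) ^ n) := by
    intro n
    have hg : Summable fun j => ‖(‖w j‖)‖ := by
      simpa only [Real.norm_of_nonneg (norm_nonneg _)] using hw_sum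
    simpa using aux_hasSum_fiber (𝕜 := ℝ) (fun j => ‖w j‖) hg n
  have hFnorm : ∀ I : ℕ →₀ ℕ, ‖F I‖ =
      |lam (mdeg I)| * ((Finsupp.multinomial I : ℝ) * ∏ j ∈ I.support, ‖w j‖ ^ I j) := by
    intro I
    rw [hF_def]
    simp only [norm_mul, norm_prod, norm_pow, Complex.norm_real, Real.norm_eq_abs,
      RCLike.norm_natCast, Complex.norm_natCast]
  have hnonneg1 : (0:ℝ) ≤ ∑' j, ‖w j‖ := tsum_nonneg fun j => norm_nonneg _
  -- summability of ‖F‖ over the sigma type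
  have hsigma : Summable fun p : Σ n : ℕ, {I : ℕ →₀ ℕ // mdeg I = n} => ‖F (e p)‖ := by
    rw [summable_sigma_of_nonneg fun p => norm_nonneg _]
    constructor
    · intro n
      have hh : Summable (fun I : {I : ℕ →₀ ℕ // mdeg I = n} =>
          |lam n| * ((Finsupp.multinomial I.1 : ℝ) * ∏ j ∈ I.1.support, ‖w j‖ ^ I.1 j)) :=
        ((hfiberR n).summable).mul_left _
      refine hh.congr fun I => ?_
      show |lam n| * _ = ‖F I.1‖
      rw [hFnorm I.1, I.2]
    · have heq : ∀ n : ℕ, ∑' I : {I : ℕ →₀ ℕ // mdeg I = n}, ‖F (e ⟨n, I⟩)‖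
          = |lam n| * (∑' j, ‖w j‖) ^ n := by
        intro n
        have h1 : ∀ I : {I : ℕ →₀ ℕ // mdeg I = n}, ‖F (e ⟨n, I⟩)‖ =
            |lam n| * ((Finsupp.multinomial I.1 : ℝ) * ∏ j ∈ I.1.support, ‖w j‖ ^ I.1 j) := by
          intro I
          show ‖F I.1‖ = _
          rw [hFnorm I.1, I.2]
        rw [tsum_congr h1, ((hfiberR n).mul_left |lam n|).tsum_eq]
      rw [summable_congr heq]
      refine Summable.of_nonneg_of_le (fun n => mul_nonneg (abs_nonneg _) (pow_nonneg hnonneg1 _))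
        (fun n => ?_) hlam_sum.abs
      calc |lam n| * (∑' j, ‖w j‖) ^ n ≤ |lam n| * 1 := by
            refine mul_le_mul_of_nonneg_left ?_ (abs_nonneg _)
            exact pow_le_one₀ hnonneg1 ha1
        _ = |lam n| := mul_one _
  have hFsum : Summable F := e.summable_iff.1 (Summable.of_norm hsigma)
  refine ⟨hFsum.congr fun I => (hterm I).symm, ?_⟩
  calc ∑' I : ℕ →₀ ℕ,
        (lam (mdeg I) : ℂ) * ((Nat.factorial (mdeg I) : ℂ) / (mfact I : ℂ)) *
          ∏ j ∈ I.support, w j ^ I j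
      = ∑' I : ℕ →₀ ℕ, F I := tsum_congr hterm
    _ = ∑' p : Σ n : ℕ, {I : ℕ →₀ ℕ // mdeg I = n}, F (e p) := (e.tsum_eq F).symm
    _ = ∑' n : ℕ, ∑' I : {I : ℕ →₀ ℕ // mdeg I = n}, F (e ⟨n, I⟩) :=
        Summable.tsum_sigma (Summable.of_norm hsigma)
    _ = ∑' n : ℕ, (lam n : ℂ) * (⟪u, v⟫ : ℂ) ^ n := by
        refine tsum_congr fun n => ?_
        rw [hinner]
        exact (hfiber n).tsum_eq
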